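/- (First-order condition at a maximizing direction; step (4) in the proof of the paper's Lemma on holomorphic sectional curvature.) Let R be a Kähler-like curvature tensor on V and let u be a unit vector with H(u) ≥ H(v) for every unit vector v ∈ V. Then for every unit vector w ∈ V with ⟨w,u⟩ = 0, one has R(u,u,u,w) = 0 and R(u,u,w,u) = 0 (here u occupies all remaining slots, and w occupies the fourth and third slot respectively). -/

import Mathlib

/-- A Kähler-like curvature tensor on a complex vector space `V`:
a map `R : V × V × V × V → ℂ` that is complex-linear in the first and third
arguments, conjugate-linear in the second and fourth arguments, and satisfies
the symmetries `R(X,Y,Z,W) = R(Z,Y,X,W)` and `R(X,Y,Z,W) = conj (R(Y,X,W,Z))`. -/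
structure IsKahlerLike {V : Type*} [AddCommGroup V] [Module ℂ V]
    (R : V → V → V → V → ℂ) : Prop where
  add1 : ∀ X X' Y Z W, R (X + X') Y Z W = R X Y Z W + R X' Y Z W
  smul1 : ∀ (a : ℂ) (X Y Z W), R (a • X) Y Z W = a * R X Y Z W
  add2 : ∀ X Y Y' Z W, R X (Y + Y') Z W = R X Y Z W + R X Y' Z W
  smul2 : ∀ (a : ℂ) (X Y Z W), R X (a • Y) Z W = (starRingEnd ℂ) a * R X Y Z W
  add3 : ∀ X Y Z Z' W, R X Y (Z + Z') W = R X Y Z W + R X Y Z' W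
  smul3 : ∀ (a : ℂ) (X Y Z W), R X Y (a • Z) W = a * R X Y Z W
  add4 : ∀ X Y Z W W', R X Y Z (W + W') = R X Y Z W + R X Y Z W'
  smul4 : ∀ (a : ℂ) (X Y Z W), R X Y Z (a • W) = (starRingEnd ℂ) a * R X Y Z W
  sym13 : ∀ X Y Z W, R X Y Z W = R Z Y X W
  symConj : ∀ X Y Z W, R X Y Z W = (starRingEnd ℂ) (R Y X W Z)

private lemma aux_poly (L A B C : ℝ)
    (h : ∀ t : ℝ, 0 < t → t ≤ 1 → L * t ≤ A * t ^ 2 + B * t ^ 3 + C * t ^ 4) : L ≤ 0 := by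
  by_contra hL
  push_neg at hL
  set K : ℝ := |A| + |B| + |C| + 1 with hK
  have hK0 : 0 < K := by positivity
  set t : ℝ := min 1 (L / (2 * K)) with ht
  clear_value t K
  have ht0 : 0 < t := by rw [ht]; exact lt_min one_pos (by positivity)
  have ht1 : t ≤ 1 := by rw [ht]; exact min_le_left _ _
  have h2 : t ≤ L / (2 * K) := by rw [ht]; exact min_le_right _ _
  have h3 := h t ht0 ht1
  have ht2 : t ^ 2 ≤ 1 := by nlinarith
  have hA : A * t ^ 2 ≤ |A| * t ^ 2 := by nlinarith [le_abs_self A, sq_nonneg t]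
  have hB : B * t ^ 3 ≤ |B| * t ^ 2 := by
    nlinarith [mul_nonneg (sub_nonneg.2 (le_abs_self B)) (pow_nonneg ht0.le 3),
      mul_nonneg (mul_nonneg (abs_nonneg B) (sq_nonneg t)) (sub_nonneg.2 ht1)]
  have hC : C * t ^ 4 ≤ |C| * t ^ 2 := by
    nlinarith [mul_nonneg (sub_nonneg.2 (le_abs_self C)) (pow_nonneg ht0.le 4),
      mul_nonneg (mul_nonneg (abs_nonneg C) (sq_nonneg t)) (sub_nonneg.2 ht2)]
  have h4 : L * t ≤ K * t ^ 2 := by nlinarith [sq_nonneg t]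
  have h5 : L ≤ K * t := by
    have h7 := mul_le_mul_of_nonneg_right h4 (le_of_lt (inv_pos.mpr ht0))
    calc L = L * t * t⁻¹ := by field_simp
    _ ≤ K * t ^ 2 * t⁻¹ := h7
    _ = K * t := by field_simp
  have h6 : K * t ≤ L / 2 := by
    calc K * t ≤ K * (L / (2 * K)) := by nlinarith
    _ = L / 2 := by field_simp
  linarith

/-- First-order condition at a maximizing direction: if the unit vector `u` maximizes the
holomorphic sectional curvature over unit vectors, then for every unit vector `w` orthogonal
to `u` one has `R(u,u,u,w) = 0` and `R(u,u,w,u) = 0`. -/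
theorem kahlerLike_max_first_order {V : Type*} [NormedAddCommGroup V] [InnerProductSpace ℂ V]
    [FiniteDimensional ℂ V]
    (R : V → V → V → V → ℂ) (hR : IsKahlerLike R)
    (u : V) (hu : ‖u‖ = 1)
    (hmax : ∀ v : V, ‖v‖ = 1 → (R v v v v).re ≤ (R u u u u).re) :
    ∀ w : V, ‖w‖ = 1 → (inner ℂ w u : ℂ) = 0 →
      R u u u w = 0 ∧ R u u w u = 0 := by
  intro w hw hwu
  have expand : ∀ a : ℂ, R (u + a • w) (u + a • w) (u + a • w) (u + a • w) =
      R u u u u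
      + (a * R w u u u + (starRingEnd ℂ) a * R u w u u + a * R u u w u
          + (starRingEnd ℂ) a * R u u u w)
      + (a * (starRingEnd ℂ) a * R w w u u + a * a * R w u w u
          + a * (starRingEnd ℂ) a * R w u u w + (starRingEnd ℂ) a * a * R u w w u
          + (starRingEnd ℂ) a * (starRingEnd ℂ) a * R u w u w
          + a * (starRingEnd ℂ) a * R u u w w)
      + (a * (starRingEnd ℂ) a * a * R w w w u
          + a * (starRingEnd ℂ) a * (starRingEnd ℂ) a * R w w u w
          + a * a * (starRingEnd ℂ) a * R w u w w
          + (starRingEnd ℂ) a * a * (starRingEnd ℂ) a * R u w w w)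
      + a * (starRingEnd ℂ) a * a * (starRingEnd ℂ) a * R w w w w := by
    intro a
    simp only [hR.add1, hR.add2, hR.add3, hR.add4, hR.smul1, hR.smul2, hR.smul3, hR.smul4]
    ring
  set c : ℂ := R u u w u with hcdef
  suffices hcz : c = 0 by
    refine ⟨?_, hcz⟩
    rw [hR.symConj u u u w, ← hcdef, hcz, map_zero]
  by_contra hc0
  have hcpos : 0 < ‖c‖ := norm_pos_iff.mpr hc0
  set e : ℂ := (starRingEnd ℂ) c / (‖c‖ : ℂ) with he
  have hec : e * c = (‖c‖ : ℂ) := by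
    rw [he, div_mul_eq_mul_div, mul_comm ((starRingEnd ℂ) c) c, Complex.mul_conj',
      sq, mul_div_assoc, div_self (by exact_mod_cast hcpos.ne'), mul_one]
  have hcec : (starRingEnd ℂ) e * (starRingEnd ℂ) c = ((‖c‖ : ℝ) : ℂ) := by
    rw [← map_mul, hec, Complex.conj_ofReal]
  have hee : ‖e‖ = 1 := by
    rw [he, norm_div, RCLike.norm_conj, Complex.norm_real, Real.norm_eq_abs,
      abs_of_pos hcpos, div_self hcpos.ne']
  have h1 : R w u u u = c := hR.sym13 w u u u
  have h2 : R u w u u = (starRingEnd ℂ) c := by rw [hR.symConj u w u u, h1]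
  have h3 : R u u u w = (starRingEnd ℂ) c := by rw [hR.symConj u u u w]
  set H : ℝ := (R u u u u).re with hH
  set q2 : ℂ := e * (starRingEnd ℂ) e * R w w u u + e * e * R w u w u
      + e * (starRingEnd ℂ) e * R w u u w + (starRingEnd ℂ) e * e * R u w w u
      + (starRingEnd ℂ) e * (starRingEnd ℂ) e * R u w u w
      + e * (starRingEnd ℂ) e * R u u w w with hq2
  set q3 : ℂ := e * (starRingEnd ℂ) e * e * R w w w u
      + e * (starRingEnd ℂ) e * (starRingEnd ℂ) e * R w w u w
      + e * e * (starRingEnd ℂ) e * R w u w w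
      + (starRingEnd ℂ) e * e * (starRingEnd ℂ) e * R u w w w with hq3
  set q4 : ℂ := e * (starRingEnd ℂ) e * e * (starRingEnd ℂ) e * R w w w w with hq4
  have h4c : ((4 * ‖c‖ : ℝ) : ℂ) = 2 * (e * c)
      + 2 * ((starRingEnd ℂ) e * (starRingEnd ℂ) c) := by
    rw [hec, hcec]; push_cast; ring
  clear_value c e H q2 q3 q4
  have key : ∀ t : ℝ, 0 < t → t ≤ 1 →
      (4 * ‖c‖) * t ≤ (2 * H - q2.re) * t ^ 2 + (-q3.re) * t ^ 3 + (H - q4.re) * t ^ 4 := by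
    intro t ht0 ht1
    set a : ℂ := (t : ℂ) * e with ha
    have hca : (starRingEnd ℂ) a = (t : ℂ) * (starRingEnd ℂ) e := by
      rw [ha, map_mul, Complex.conj_ofReal]
    have hna : ‖a‖ = t := by
      rw [ha, norm_mul, hee, Complex.norm_real, Real.norm_eq_abs, abs_of_pos ht0, mul_one]
    set x : V := u + a • w with hx
    have hiuw : (inner ℂ u (a • w) : ℂ) = 0 := by
      rw [inner_smul_right, inner_eq_zero_symm.mpr hwu, mul_zero]
    have hnx : ‖x‖ ^ 2 = 1 + t ^ 2 := by
      rw [hx, @norm_add_sq ℂ, hiuw, hu, norm_smul, hna, hw]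
      simp
    have hnxpos : 0 < ‖x‖ := by
      nlinarith [norm_nonneg x, sq_nonneg t]
    set s : ℝ := ‖x‖⁻¹ with hs
    have hspos : 0 < s := inv_pos.mpr hnxpos
    set v : V := s • x with hv
    have hnv : ‖v‖ = 1 := by
      rw [hv, norm_smul, hs, Real.norm_eq_abs, abs_of_pos (inv_pos.mpr hnxpos),
        inv_mul_cancel₀ hnxpos.ne']
    have hmv := hmax v hnv
    have hvs : v = ((s : ℂ)) • x := rfl
    have hRv : (R v v v v).re = s ^ 4 * (R x x x x).re := by
      rw [hvs, hR.smul1, hR.smul2, hR.smul3, hR.smul4, Complex.conj_ofReal]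
      have h9 : ((s:ℂ) * ((s:ℂ) * ((s:ℂ) * ((s:ℂ) * R x x x x)))) = ((s^4 : ℝ) : ℂ) * R x x x x := by
        push_cast; ring
      rw [h9, Complex.re_ofReal_mul]
    have hExp : R x x x x = R u u u u + ((4 * ‖c‖ : ℝ) : ℂ) * (t : ℂ)
        + ((t ^ 2 : ℝ) : ℂ) * q2 + ((t ^ 3 : ℝ) : ℂ) * q3 + ((t ^ 4 : ℝ) : ℂ) * q4 := by
      rw [hx, expand a, h1, h2, h3, hca, hq2, hq3, hq4, h4c, ha]
      push_cast
      ring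
    have hEre : (R x x x x).re = H + (4 * ‖c‖) * t + q2.re * t ^ 2
        + q3.re * t ^ 3 + q4.re * t ^ 4 := by
      rw [hExp]
      simp only [Complex.add_re, ← Complex.ofReal_mul, Complex.re_ofReal_mul,
        Complex.ofReal_re]
      rw [hH]
      ring
    have hs4 : s ^ 4 * (1 + t ^ 2) ^ 2 = 1 := by
      rw [hs]
      field_simp
      rw [← hnx]; ring
    have h9 : (R x x x x).re ≤ H * (1 + t ^ 2) ^ 2 := by
      have h8 : s ^ 4 * (R x x x x).re * (1 + t ^ 2) ^ 2 ≤ H * (1 + t ^ 2) ^ 2 := by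
        rw [hRv] at hmv
        exact mul_le_mul_of_nonneg_right hmv (by positivity)
      calc (R x x x x).re = s ^ 4 * (R x x x x).re * (1 + t ^ 2) ^ 2 := by
            rw [mul_right_comm, hs4, one_mul]
      _ ≤ _ := h8
    rw [hEre] at h9
    nlinarith [h9]
  have hfin := aux_poly (4 * ‖c‖) (2 * H - q2.re) (-q3.re) (H - q4.re) key
  nlinarith [hcpos]
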